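/- Let c > 0 and let q : ℝ⁴ → (symmetric bilinear forms on ℝ³) be continuous with q(x) positive semidefinite for every x ∈ ℝ⁴, and let τ be the associated time separation: for a Lipschitz curve λ : [0,1] → ℝ⁴ with a.e. derivative λ′ = (λ′₁, λ′_⊥) ∈ ℝ × ℝ³ set G_λ(t) := −c·(λ′₁(t))² + q(λ(t))(λ′_⊥(t), λ′_⊥(t)); λ is admissible if λ′₁ ≥ 0 and G_λ ≤ 0 a.e.; τ(p,p′) := sup{∫₀¹ √(−G_λ(t)) dt : λ admissible with λ(0) = p, λ(1) = p′}, with τ(p,p′) := 0 if no admissible curve exists. Let 𝔭 ∈ (0,1], n ≥ 1, 0 < r ≤ 1, x ∈ ℝ⁴, and x₁,…,x_n ∈ ℝ⁴ with Euclidean distance |xᵢ − x| ≤ r² for all i. Set xᵢ⁻ := xᵢ − r·e₁ and xᵢ⁺ := xᵢ + r·e₁, with the convention x_{n+1}⁺ := x₁⁺. Then ∑_{i=1}^n τ(xᵢ⁻, x_{i+1}⁺)^𝔭 ≤ n·(2r√c)^𝔭 = ∑_{i=1}^n τ(xᵢ⁻, xᵢ⁺)^𝔭. -/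

import Mathlib

open MeasureTheory Set

noncomputable section

/-- Euclidean `ℝ³`. -/
abbrev E3 : Type := EuclideanSpace ℝ (Fin 3)

/-- `ℝ⁴` split as `ℝ × ℝ³`, the first factor carrying the time direction `e₁`. -/
abbrev M4 : Type := ℝ × E3

/-- `G_λ(t) := −c·(λ′₁ t)² + q(λ t)(λ′_⊥ t, λ′_⊥ t)` for a curve `λ` with (a.e.)
derivative `λ′ = (λ′₁, λ′_⊥)`. -/
def curveG (c : ℝ) (q : M4 → E3 →L[ℝ] E3 →L[ℝ] ℝ) (lam lam' : ℝ → M4) (t : ℝ) : ℝ :=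
  -c * (lam' t).1 ^ 2 + q (lam t) (lam' t).2 (lam' t).2

/-- `(lam, lam')` is an admissible pair: `lam` is Lipschitz on `[0,1]`, `lam'` is an
a.e.-defined derivative of `lam` on `[0,1]`, and a.e. `λ′₁ ≥ 0` and `G_λ ≤ 0`
(future-directed causal for the metric `−c·dT² + q`). -/
def AdmissiblePair (c : ℝ) (q : M4 → E3 →L[ℝ] E3 →L[ℝ] ℝ) (lam lam' : ℝ → M4) : Prop :=
  (∃ K : NNReal, LipschitzOnWith K lam (Icc 0 1)) ∧
  (∀ᵐ t ∂(volume.restrict (Icc (0:ℝ) 1)), HasDerivWithinAt lam (lam' t) (Icc 0 1) t) ∧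
  (∀ᵐ t ∂(volume.restrict (Icc (0:ℝ) 1)), 0 ≤ (lam' t).1 ∧ curveG c q lam lam' t ≤ 0)

/-- The Lorentzian length `L(λ) = ∫₀¹ √(−G_λ(t)) dt`. -/
def lorLength (c : ℝ) (q : M4 → E3 →L[ℝ] E3 →L[ℝ] ℝ) (lam lam' : ℝ → M4) : ℝ :=
  ∫ t in Icc (0:ℝ) 1, Real.sqrt (-(curveG c q lam lam' t))

/-- The time separation `τ(p,p') := sup {L(λ) : λ admissible Lipschitz from p to p'}`,
with `τ(p,p') = 0` if no admissible curve exists. -/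
def timeSep (c : ℝ) (q : M4 → E3 →L[ℝ] E3 →L[ℝ] ℝ) (p p' : M4) : ℝ :=
  sSup (insert (0:ℝ) {L | ∃ lam lam' : ℝ → M4,
    AdmissiblePair c q lam lam' ∧ lam 0 = p ∧ lam 1 = p' ∧ L = lorLength c q lam lam'})

open Filter

/-- FTC inequality for Lipschitz functions with a.e. derivative on `[0,1]`. -/
lemma lip_ftc (g : ℝ → ℝ) (K : NNReal) (hK : LipschitzOnWith K g (Icc 0 1))
    (g' : ℝ → ℝ) (hm : AEStronglyMeasurable g' (volume.restrict (Icc (0:ℝ) 1)))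
    (hd : ∀ᵐ t ∂(volume.restrict (Icc (0:ℝ) 1)), HasDerivWithinAt g (g' t) (Icc 0 1) t) :
    ∫ t in Icc (0:ℝ) 1, g' t ≤ g 1 - g 0 := by
  set μ := volume.restrict (Icc (0:ℝ) 1) with hμ
  set h : ℕ → ℝ := fun n => 1 / ((n : ℝ) + 1) with hh
  have hhpos : ∀ n, 0 < h n := fun n => by positivity
  have hhle : ∀ n, h n ≤ 1 := by
    intro n
    rw [hh]
    rw [div_le_one (by positivity)]
    simp
  set F : ℕ → ℝ → ℝ := fun n t => (g (min (t + h n) 1) - g t) * ((n : ℝ) + 1) with hF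
  have hmaps : ∀ n, MapsTo (fun t => min (t + h n) 1) (Icc (0:ℝ) 1) (Icc (0:ℝ) 1) := by
    intro n t ht
    exact ⟨le_min (by nlinarith [ht.1, (hhpos n).le]) zero_le_one, min_le_right _ _⟩
  have hgc : ContinuousOn g (Icc (0:ℝ) 1) := hK.continuousOn
  have hσc : ∀ n, ContinuousOn (fun t => g (min (t + h n) 1)) (Icc (0:ℝ) 1) := by
    intro n
    exact hgc.comp ((continuous_id.add continuous_const).min continuous_const).continuousOn
      (hmaps n)
  have hFc : ∀ n, ContinuousOn (F n) (Icc (0:ℝ) 1) := by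
    intro n
    exact ((hσc n).sub hgc).mul continuousOn_const
  have hFmeas : ∀ n, AEStronglyMeasurable (F n) μ := fun n =>
    (hFc n).aestronglyMeasurable measurableSet_Icc
  have hbound : ∀ n, ∀ᵐ t ∂μ, ‖F n t‖ ≤ (K : ℝ) := by
    intro n
    filter_upwards [ae_restrict_mem measurableSet_Icc] with t ht
    have h1 : dist (g (min (t + h n) 1)) (g t) ≤ (K : ℝ) * dist (min (t + h n) 1) t :=
      hK.dist_le_mul _ (hmaps n ht) _ ht
    have h2 : dist (min (t + h n) 1) t ≤ h n := by
      rw [Real.dist_eq, abs_le]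
      constructor
      · have : t ≤ min (t + h n) 1 := le_min (by linarith [(hhpos n).le]) ht.2
        linarith [(hhpos n).le]
      · have : min (t + h n) 1 ≤ t + h n := min_le_left _ _
        linarith
    have := h1.trans (by nlinarith [h2, K.coe_nonneg] : (K : ℝ) * dist (min (t + h n) 1) t ≤ (K : ℝ) * h n)
    rw [Real.dist_eq] at this
    have hne : h n * ((n:ℝ)+1) = 1 := by
      rw [hh]; field_simp
    calc ‖F n t‖ = |g (min (t + h n) 1) - g t| * ((n:ℝ)+1) := by
          rw [hF]; simp [abs_mul, abs_of_nonneg (by positivity : (0:ℝ) ≤ (n:ℝ)+1)]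
      _ ≤ ((K:ℝ) * h n) * ((n:ℝ)+1) := by
          apply mul_le_mul_of_nonneg_right this (by positivity)
      _ = (K : ℝ) := by rw [mul_assoc, hne, mul_one]
  have hIoo : ∀ᵐ t ∂μ, t ∈ Ioo (0:ℝ) 1 := by
    rw [hμ, ← Measure.restrict_congr_set Ioo_ae_eq_Icc]
    exact ae_restrict_mem measurableSet_Ioo
  have hlim : ∀ᵐ t ∂μ, Tendsto (fun n => F n t) atTop (nhds (g' t)) := by
    filter_upwards [hd, hIoo] with t htd ht
    rw [hasDerivWithinAt_iff_tendsto_slope] at htd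
    have hh0 : Tendsto h atTop (nhds 0) := tendsto_one_div_add_atTop_nhds_zero_nat
    have hev : ∀ᶠ n in atTop, h n < 1 - t := hh0.eventually_lt_const (by linarith [ht.2])
    have huev : ∀ᶠ n in atTop, min (t + h n) 1 = t + h n := by
      filter_upwards [hev] with n hn
      exact min_eq_left (by linarith)
    -- u n tends to t within Icc \ {t}
    have hu_tendsto : Tendsto (fun n => min (t + h n) 1) atTop
        (nhdsWithin t (Icc (0:ℝ) 1 \ {t})) := by
      apply tendsto_nhdsWithin_of_tendsto_nhds_of_eventually_within
      · apply Tendsto.congr' (huev.mono fun n hn => hn.symm)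
        have : Tendsto (fun n => t + h n) atTop (nhds (t + 0)) :=
          tendsto_const_nhds.add hh0
        simpa using this
      · filter_upwards [hev] with n hn
        rw [min_eq_left (by linarith)]
        refine ⟨⟨by linarith [ht.1, (hhpos n).le], by linarith⟩, ?_⟩
        simp only [mem_singleton_iff]
        intro hcon
        have := hhpos n
        linarith [congrArg id hcon]
    have hslope : Tendsto (fun n => slope g t (min (t + h n) 1)) atTop (nhds (g' t)) :=
      htd.comp hu_tendsto
    apply hslope.congr'
    filter_upwards [huev] with n hn
    have hinv : (h n)⁻¹ = (n:ℝ)+1 := by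
      rw [hh]; simp
    simp only [hF]
    rw [hn, slope_def_field, show t + h n - t = h n from by ring, div_eq_mul_inv, hinv]
  have key : Tendsto (fun n => ∫ t, F n t ∂μ) atTop (nhds (∫ t, g' t ∂μ)) :=
    tendsto_integral_of_dominated_convergence (fun _ => (K : ℝ)) hFmeas
      (integrableOn_const (by simp [Real.volume_Icc]) enorm_ne_top) hbound hlim
  have hIg : IntervalIntegrable g volume 0 1 := by
    apply ContinuousOn.intervalIntegrable
    rwa [uIcc_of_le zero_le_one]
  have hInt : ∀ n, ∫ t, F n t ∂μ ≤ g 1 - g 0 + (K : ℝ) * h n := by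
    intro n
    have h01 : (0:ℝ) ≤ 1 - h n := by linarith [hhle n]
    have hIσ : IntervalIntegrable (fun t => g (min (t + h n) 1)) volume 0 1 := by
      apply ContinuousOn.intervalIntegrable
      rw [uIcc_of_le zero_le_one]; exact hσc n
    have e1 : ∫ t, F n t ∂μ = (∫ t in (0:ℝ)..1, (g (min (t + h n) 1) - g t)) * ((n:ℝ)+1) := by
      simp only [hμ, hF]
      rw [intervalIntegral.integral_of_le zero_le_one, ← integral_Icc_eq_integral_Ioc,
        ← MeasureTheory.integral_mul_const]
    have e2 : ∫ t in (0:ℝ)..1, (g (min (t + h n) 1) - g t)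
        = (∫ t in (0:ℝ)..1, g (min (t + h n) 1)) - ∫ t in (0:ℝ)..1, g t :=
      intervalIntegral.integral_sub hIσ hIg
    have hsub1 : uIcc (0:ℝ) (1 - h n) ⊆ uIcc (0:ℝ) 1 := by
      rw [uIcc_of_le h01, uIcc_of_le zero_le_one]
      exact Icc_subset_Icc le_rfl (by linarith [(hhpos n).le])
    have hsub2 : uIcc (1 - h n) (1:ℝ) ⊆ uIcc (0:ℝ) 1 := by
      rw [uIcc_of_le (by linarith [(hhpos n).le]), uIcc_of_le zero_le_one]
      exact Icc_subset_Icc h01 le_rfl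
    have hsub3 : uIcc (0:ℝ) (h n) ⊆ uIcc (0:ℝ) 1 := by
      rw [uIcc_of_le (hhpos n).le, uIcc_of_le zero_le_one]
      exact Icc_subset_Icc le_rfl (hhle n)
    have hsub4 : uIcc (h n) (1:ℝ) ⊆ uIcc (0:ℝ) 1 := by
      rw [uIcc_of_le (hhle n), uIcc_of_le zero_le_one]
      exact Icc_subset_Icc (hhpos n).le le_rfl
    have e3 : ∫ t in (0:ℝ)..1, g (min (t + h n) 1)
        = (∫ t in (0:ℝ)..(1 - h n), g (min (t + h n) 1))
          + ∫ t in (1 - h n)..1, g (min (t + h n) 1) :=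
      (intervalIntegral.integral_add_adjacent_intervals (hIσ.mono_set hsub1)
        (hIσ.mono_set hsub2)).symm
    have e4 : ∫ t in (0:ℝ)..(1 - h n), g (min (t + h n) 1) = ∫ t in (h n)..1, g t := by
      rw [show (∫ t in (0:ℝ)..(1 - h n), g (min (t + h n) 1))
          = ∫ t in (0:ℝ)..(1 - h n), g (t + h n) from
        intervalIntegral.integral_congr (fun t ht => by
          rw [uIcc_of_le h01] at ht
          rw [min_eq_left (by linarith [ht.2])])]
      rw [intervalIntegral.integral_comp_add_right g (h n)]
      norm_num
    have e5 : ∫ t in (1 - h n)..1, g (min (t + h n) 1) = h n * g 1 := by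
      rw [show (∫ t in (1 - h n)..1, g (min (t + h n) 1))
          = ∫ t in (1 - h n)..1, g 1 from
        intervalIntegral.integral_congr (fun t ht => by
          rw [uIcc_of_le (by linarith [(hhpos n).le])] at ht
          rw [min_eq_right (by linarith [ht.1])])]
      rw [intervalIntegral.integral_const]
      rw [smul_eq_mul]; ring
    have e6 : ∫ t in (0:ℝ)..1, g t = (∫ t in (0:ℝ)..(h n), g t) + ∫ t in (h n)..1, g t :=
      (intervalIntegral.integral_add_adjacent_intervals (hIg.mono_set hsub3)
        (hIg.mono_set hsub4)).symm
    have e7 : h n * (g 0 - (K:ℝ) * h n) ≤ ∫ t in (0:ℝ)..(h n), g t := by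
      have : ∫ t in (0:ℝ)..(h n), (g 0 - (K:ℝ) * h n) ≤ ∫ t in (0:ℝ)..(h n), g t := by
        apply intervalIntegral.integral_mono_on (hhpos n).le
          intervalIntegrable_const (hIg.mono_set hsub3)
        intro s hs
        have hsmem : s ∈ Icc (0:ℝ) 1 := ⟨hs.1, hs.2.trans (hhle n)⟩
        have := hK.dist_le_mul s hsmem 0 ⟨le_rfl, zero_le_one⟩
        rw [Real.dist_eq, Real.dist_eq] at this
        have habs : |g s - g 0| ≤ (K:ℝ) * h n := by
          apply this.trans
          apply mul_le_mul_of_nonneg_left _ K.coe_nonneg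
          rw [abs_of_nonneg (by linarith [hs.1])]
          simpa using hs.2
        have := abs_le.1 habs
        linarith [this.1]
      calc h n * (g 0 - (K:ℝ) * h n)
          = ∫ t in (0:ℝ)..(h n), (g 0 - (K:ℝ) * h n) := by
            rw [intervalIntegral.integral_const, smul_eq_mul]; ring
        _ ≤ _ := this
    have hne : h n * ((n:ℝ)+1) = 1 := by rw [hh]; field_simp
    rw [e1, e2, e3, e4, e5, e6]
    have : (h n * g 1 - ∫ t in (0:ℝ)..(h n), g t) * ((n:ℝ)+1)
        ≤ (h n * g 1 - h n * (g 0 - (K:ℝ) * h n)) * ((n:ℝ)+1) := by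
      apply mul_le_mul_of_nonneg_right _ (by positivity)
      linarith [e7]
    calc ((∫ t in (h n)..1, g t) + h n * g 1
          - ((∫ t in (0:ℝ)..(h n), g t) + ∫ t in (h n)..1, g t)) * ((n:ℝ)+1)
        = (h n * g 1 - ∫ t in (0:ℝ)..(h n), g t) * ((n:ℝ)+1) := by ring
      _ ≤ (h n * g 1 - h n * (g 0 - (K:ℝ) * h n)) * ((n:ℝ)+1) := this
      _ = (g 1 - g 0 + (K:ℝ) * h n) * (h n * ((n:ℝ)+1)) := by ring
      _ = g 1 - g 0 + (K:ℝ) * h n := by rw [hne, mul_one]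
  have hrhs : Tendsto (fun n => g 1 - g 0 + (K : ℝ) * h n) atTop (nhds (g 1 - g 0)) := by
    have : Tendsto (fun n => (K:ℝ) * h n) atTop (nhds ((K:ℝ) * 0)) :=
      tendsto_const_nhds.mul tendsto_one_div_add_atTop_nhds_zero_nat
    simpa using tendsto_const_nhds.add this
  exact le_of_tendsto_of_tendsto' key hrhs hInt

lemma lorLength_le (c : ℝ) (hc : 0 < c) (q : M4 → E3 →L[ℝ] E3 →L[ℝ] ℝ)
    (hqc : Continuous q) (hqpos : ∀ x v, 0 ≤ q x v v)
    (lam lam' : ℝ → M4) (h : AdmissiblePair c q lam lam') :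
    lorLength c q lam lam' ≤ Real.sqrt c * ((lam 1).1 - (lam 0).1) := by
  obtain ⟨⟨K, hK⟩, hd, hcaus⟩ := h
  set μ := volume.restrict (Icc (0:ℝ) 1) with hμ
  have hIoo : ∀ᵐ t ∂μ, t ∈ Ioo (0:ℝ) 1 := by
    rw [hμ, ← Measure.restrict_congr_set Ioo_ae_eq_Icc]
    exact ae_restrict_mem measurableSet_Ioo
  have hderiv_at : ∀ᵐ t ∂μ, HasDerivAt lam (lam' t) t := by
    filter_upwards [hd, hIoo] with t h1 h2
    exact h1.hasDerivAt (Icc_mem_nhds h2.1 h2.2)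
  have hlam'_eq : lam' =ᵐ[μ] deriv lam := by
    filter_upwards [hderiv_at] with t h1
    exact h1.deriv.symm
  have hlam'_meas : AEStronglyMeasurable lam' μ :=
    (stronglyMeasurable_deriv lam).aestronglyMeasurable.congr hlam'_eq.symm
  have hlam_meas : AEStronglyMeasurable lam μ :=
    hK.continuousOn.aestronglyMeasurable measurableSet_Icc
  have hnorm : ∀ᵐ t ∂μ, ‖lam' t‖ ≤ (K : ℝ) := by
    filter_upwards [hd, hIoo] with t h1 h2
    rw [hasDerivWithinAt_iff_tendsto_slope] at h1
    have hne : (nhdsWithin t (Icc (0:ℝ) 1 \ {t})).NeBot := by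
      have heq : Icc (0:ℝ) 1 \ {t} = {t}ᶜ ∩ Icc (0:ℝ) 1 := by
        rw [inter_comm]; rfl
      rw [heq, nhdsWithin_inter_of_mem' (mem_nhdsWithin_of_mem_nhds (Icc_mem_nhds h2.1 h2.2))]
      exact inferInstance
    have hslope_bound : ∀ᶠ y in nhdsWithin t (Icc (0:ℝ) 1 \ {t}), ‖slope lam t y‖ ≤ (K : ℝ) := by
      filter_upwards [eventually_mem_nhdsWithin] with y hy
      have hyI : y ∈ Icc (0:ℝ) 1 := hy.1
      have hyne : y ≠ t := by simpa using hy.2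
      have htI : t ∈ Icc (0:ℝ) 1 := ⟨h2.1.le, h2.2.le⟩
      have hdist : dist (lam y) (lam t) ≤ (K : ℝ) * dist y t := hK.dist_le_mul y hyI t htI
      have hyt : (0:ℝ) < ‖y - t‖ := by
        simpa [norm_sub_pos_iff] using sub_ne_zero_of_ne hyne
      have hnorm_slope : ‖slope lam t y‖ = ‖y - t‖⁻¹ * ‖lam y - lam t‖ := by
        rw [slope, vsub_eq_sub, norm_smul, norm_inv]
      rw [dist_eq_norm, dist_eq_norm] at hdist
      rw [hnorm_slope]
      calc ‖y - t‖⁻¹ * ‖lam y - lam t‖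
          ≤ ‖y - t‖⁻¹ * ((K:ℝ) * ‖y - t‖) := by
            apply mul_le_mul_of_nonneg_left hdist (by positivity)
        _ = (K : ℝ) := by
            have habs : |y - t| ≠ 0 := by rw [← Real.norm_eq_abs]; exact hyt.ne'
            field_simp [habs]
    exact le_of_tendsto h1.norm hslope_bound
  -- the scalar derivative
  have hg_deriv : ∀ᵐ t ∂μ, HasDerivWithinAt (fun s => (lam s).1) ((lam' t).1) (Icc 0 1) t := by
    filter_upwards [hd] with t h1
    have h2 := h1.hasFDerivWithinAt.fst
    have h3 : (ContinuousLinearMap.fst ℝ ℝ E3).comp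
        (ContinuousLinearMap.toSpanSingleton ℝ (lam' t))
        = ContinuousLinearMap.toSpanSingleton ℝ ((lam' t).1) := by
      ext
      simp
    rw [h3] at h2
    exact h2
  have hg'_meas : AEStronglyMeasurable (fun t => (lam' t).1) μ :=
    continuous_fst.comp_aestronglyMeasurable hlam'_meas
  have hg'_bound : ∀ᵐ t ∂μ, ‖(lam' t).1‖ ≤ (K : ℝ) := by
    filter_upwards [hnorm] with t h1
    exact (norm_fst_le (lam' t)).trans h1
  have hconstK : Integrable (fun _ : ℝ => (K : ℝ)) μ := by
    rw [hμ]
    exact integrableOn_const (by simp [Real.volume_Icc]) enorm_ne_top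
  have hg'_int : Integrable (fun t => (lam' t).1) μ :=
    Integrable.mono' hconstK hg'_meas hg'_bound
  -- the integrand
  set f : ℝ → ℝ := fun t => Real.sqrt (-(curveG c q lam lam' t)) with hf
  have hf_le : ∀ᵐ t ∂μ, f t ≤ Real.sqrt c * (lam' t).1 := by
    filter_upwards [hcaus] with t ⟨h1, h2⟩
    have hle : -(curveG c q lam lam' t) ≤ c * (lam' t).1 ^ 2 := by
      have := hqpos (lam t) (lam' t).2
      simp only [curveG]
      nlinarith
    calc f t ≤ Real.sqrt (c * (lam' t).1 ^ 2) := Real.sqrt_le_sqrt hle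
      _ = Real.sqrt c * (lam' t).1 := by
          rw [Real.sqrt_mul hc.le, Real.sqrt_sq h1]
  have hf_nonneg : ∀ t, 0 ≤ f t := fun t => Real.sqrt_nonneg _
  have hΦ : Continuous (fun p : M4 × M4 =>
      Real.sqrt (-(-c * p.2.1 ^ 2 + q p.1 p.2.2 p.2.2))) := by
    apply Real.continuous_sqrt.comp
    apply Continuous.neg
    apply Continuous.add
    · exact (continuous_const.mul ((continuous_fst.comp continuous_snd).pow 2))
    · exact Continuous.clm_apply
        (Continuous.clm_apply (hqc.comp continuous_fst)
          (continuous_snd.comp continuous_snd))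
        (continuous_snd.comp continuous_snd)
  have hf_meas : AEStronglyMeasurable f μ := by
    have := hΦ.comp_aestronglyMeasurable (hlam_meas.prodMk hlam'_meas)
    exact this
  have hf_bound : ∀ᵐ t ∂μ, ‖f t‖ ≤ Real.sqrt c * (K : ℝ) := by
    filter_upwards [hf_le, hg'_bound, hcaus] with t h1 h2 h3
    rw [Real.norm_eq_abs, abs_of_nonneg (hf_nonneg t)]
    refine h1.trans ?_
    apply mul_le_mul_of_nonneg_left _ (Real.sqrt_nonneg c)
    calc (lam' t).1 ≤ |(lam' t).1| := le_abs_self _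
      _ ≤ (K : ℝ) := by rwa [← Real.norm_eq_abs]
  have hf_int : Integrable f μ :=
    Integrable.mono' (hconstK.const_mul (Real.sqrt c)) hf_meas hf_bound
  have step1 : lorLength c q lam lam' ≤ ∫ t, Real.sqrt c * (lam' t).1 ∂μ := by
    rw [lorLength, ← hμ]
    exact integral_mono_ae hf_int (hg'_int.const_mul _) hf_le
  have step2 : ∫ t, Real.sqrt c * (lam' t).1 ∂μ = Real.sqrt c * ∫ t, (lam' t).1 ∂μ :=
    integral_const_mul _ _
  have step3 : ∫ t, (lam' t).1 ∂μ ≤ (lam 1).1 - (lam 0).1 := by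
    have hKg : LipschitzOnWith K (fun s => (lam s).1) (Icc 0 1) := by
      have h1 : LipschitzWith 1 (Prod.fst : M4 → ℝ) := LipschitzWith.prod_fst
      have := h1.comp_lipschitzOnWith hK
      rw [one_mul] at this; exact this
    exact lip_ftc _ K hKg _ hg'_meas hg_deriv
  calc lorLength c q lam lam' ≤ Real.sqrt c * ∫ t, (lam' t).1 ∂μ := by rw [← step2]; exact step1
    _ ≤ Real.sqrt c * ((lam 1).1 - (lam 0).1) :=
        mul_le_mul_of_nonneg_left step3 (Real.sqrt_nonneg c)

lemma mem_le (c : ℝ) (hc : 0 < c) (q : M4 → E3 →L[ℝ] E3 →L[ℝ] ℝ)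
    (hqc : Continuous q) (hqpos : ∀ x v, 0 ≤ q x v v) (a b : M4) (hab : a.1 ≤ b.1) :
    ∀ L ∈ insert (0:ℝ) {L | ∃ lam lam' : ℝ → M4,
      AdmissiblePair c q lam lam' ∧ lam 0 = a ∧ lam 1 = b ∧ L = lorLength c q lam lam'},
      L ≤ Real.sqrt c * (b.1 - a.1) := by
  rintro L (rfl | ⟨lam, lam', hadm, h0, h1, rfl⟩)
  · have := Real.sqrt_nonneg c
    nlinarith
  · have := lorLength_le c hc q hqc hqpos lam lam' hadm
    rwa [h0, h1] at this

lemma timeSep_le (c : ℝ) (hc : 0 < c) (q : M4 → E3 →L[ℝ] E3 →L[ℝ] ℝ)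
    (hqc : Continuous q) (hqpos : ∀ x v, 0 ≤ q x v v) (a b : M4) (hab : a.1 ≤ b.1) :
    timeSep c q a b ≤ Real.sqrt c * (b.1 - a.1) := by
  apply Real.sSup_le (mem_le c hc q hqc hqpos a b hab)
  have := Real.sqrt_nonneg c
  nlinarith

lemma timeSep_nonneg (c : ℝ) (hc : 0 < c) (q : M4 → E3 →L[ℝ] E3 →L[ℝ] ℝ)
    (hqc : Continuous q) (hqpos : ∀ x v, 0 ≤ q x v v) (a b : M4) (hab : a.1 ≤ b.1) :
    0 ≤ timeSep c q a b :=
  le_csSup ⟨_, fun L hL => mem_le c hc q hqc hqpos a b hab L hL⟩ (mem_insert 0 _)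

lemma timeSep_straight (c : ℝ) (hc : 0 < c) (q : M4 → E3 →L[ℝ] E3 →L[ℝ] ℝ)
    (hqc : Continuous q) (hqpos : ∀ x v, 0 ≤ q x v v) (r : ℝ) (hr0 : 0 < r) (y : M4) :
    timeSep c q (y - (r, 0)) (y + (r, 0)) = 2 * r * Real.sqrt c := by
  have hab : (y - (r, (0:E3))).1 ≤ (y + (r, (0:E3))).1 := by
    simp only [Prod.fst_sub, Prod.fst_add]
    linarith
  apply le_antisymm
  · have := timeSep_le c hc q hqc hqpos _ _ hab
    have he : (y + (r, (0:E3))).1 - (y - (r, (0:E3))).1 = 2 * r := by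
      simp only [Prod.fst_sub, Prod.fst_add]; ring
    rw [he] at this
    calc timeSep c q (y - (r, 0)) (y + (r, 0)) ≤ Real.sqrt c * (2 * r) := this
      _ = 2 * r * Real.sqrt c := by ring
  · -- the straight curve
    set lam : ℝ → M4 := fun t => (y.1 - r + 2 * r * t, y.2) with hlam
    set lam' : ℝ → M4 := fun _ => (2 * r, (0:E3)) with hlam'
    have hderiv : ∀ t : ℝ, HasDerivAt lam (lam' t) t := by
      intro t
      apply HasDerivAt.prodMk
      · simpa using (((hasDerivAt_id t).const_mul (2*r)).const_add (y.1 - r))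
      · exact hasDerivAt_const t y.2
    have hlip : LipschitzOnWith (Real.toNNReal (2*r)) lam (Icc 0 1) := by
      apply LipschitzWith.lipschitzOnWith
      apply LipschitzWith.of_dist_le_mul
      intro s t
      simp only [hlam, Prod.dist_eq, Real.dist_eq]
      rw [max_le_iff]
      constructor
      · have he : y.1 - r + 2*r*s - (y.1 - r + 2*r*t) = 2*r*(s - t) := by ring
        rw [he, abs_mul, Real.coe_toNNReal _ (by positivity),
          abs_of_nonneg (by positivity : (0:ℝ) ≤ 2*r)]
      · simp only [dist_self]
        positivity
    have hG : ∀ t, curveG c q lam lam' t = -c * (2*r)^2 := by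
      intro t
      simp only [curveG, hlam']
      simp
    have hadm : AdmissiblePair c q lam lam' := by
      refine ⟨⟨_, hlip⟩, ?_, ?_⟩
      · exact Eventually.of_forall fun t => (hderiv t).hasDerivWithinAt
      · apply Eventually.of_forall
        intro t
        refine ⟨by positivity, ?_⟩
        rw [hG t]
        have := mul_nonneg hc.le (sq_nonneg (2*r))
        linarith
    have hlen : lorLength c q lam lam' = 2 * r * Real.sqrt c := by
      rw [lorLength]
      have : ∀ t, Real.sqrt (-(curveG c q lam lam' t)) = 2 * r * Real.sqrt c := by
        intro t
        rw [hG t]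
        rw [show -(-c * (2*r)^2) = c * (2*r)^2 by ring]
        rw [Real.sqrt_mul hc.le, Real.sqrt_sq (by positivity : (0:ℝ) ≤ 2*r)]
        ring
      simp only [this]
      rw [setIntegral_const]
      simp [Real.volume_Icc]
    have h0 : lam 0 = y - (r, 0) := by
      have he : y - ((r:ℝ), (0:E3)) = (y.1 - r, y.2) := by ext <;> simp
      rw [he]
      simp only [hlam]
      norm_num
    have h1' : lam 1 = y + (r, 0) := by
      have he : y + ((r:ℝ), (0:E3)) = (y.1 + r, y.2) := by ext <;> simp
      rw [he]
      simp only [hlam]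
      rw [Prod.mk.injEq]
      exact ⟨by ring, rfl⟩
    rw [← hlen]
    apply le_csSup ⟨_, fun L hL => mem_le c hc q hqc hqpos _ _ hab L hL⟩
    right
    exact ⟨lam, lam', hadm, h0, h1', rfl⟩

/-- (`τ^𝔭`-cyclical monotonicity of shifted configurations.)
Let `τ` be the time separation of the metric `−c·dT² + q` as above, `𝔭 ∈ (0,1]`,
`0 < r ≤ 1`, and `x₁, …, x_{n+1}` points within Euclidean distance `r²` of `x`.
With `xᵢ± := xᵢ ± r·e₁` and cyclic convention `x_{n+2}⁺ = x₁⁺`,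
`∑ τ(xᵢ⁻, x_{i+1}⁺)^𝔭 ≤ (n+1)·(2r√c)^𝔭 = ∑ τ(xᵢ⁻, xᵢ⁺)^𝔭`. -/
theorem stmt_17 (c : ℝ) (hc : 0 < c) (q : M4 → E3 →L[ℝ] E3 →L[ℝ] ℝ)
    (hqc : Continuous q) (hqsym : ∀ x v w, q x v w = q x w v)
    (hqpos : ∀ x v, 0 ≤ q x v v)
    (pp : ℝ) (hpp : pp ∈ Ioc (0:ℝ) 1)
    (n : ℕ) (r : ℝ) (hr0 : 0 < r) (hr1 : r ≤ 1)
    (x : M4) (xs : Fin (n + 1) → M4)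
    (hxs : ∀ i, Real.sqrt ((xs i - x).1 ^ 2 + ‖(xs i - x).2‖ ^ 2) ≤ r ^ 2) :
    ∑ i, timeSep c q (xs i - (r, 0)) (xs (i + 1) + (r, 0)) ^ pp
      ≤ ((n : ℝ) + 1) * (2 * r * Real.sqrt c) ^ pp ∧
    ((n : ℝ) + 1) * (2 * r * Real.sqrt c) ^ pp
      = ∑ i, timeSep c q (xs i - (r, 0)) (xs i + (r, 0)) ^ pp := by
  have habs : ∀ i, |(xs i - x).1| ≤ r ^ 2 := by
    intro i
    have h1 : Real.sqrt ((xs i - x).1 ^ 2) ≤ Real.sqrt ((xs i - x).1 ^ 2 + ‖(xs i - x).2‖ ^ 2) :=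
      Real.sqrt_le_sqrt (le_add_of_nonneg_right (by positivity))
    rw [Real.sqrt_sq_eq_abs] at h1
    exact h1.trans (hxs i)
  set d : Fin (n + 1) → ℝ := fun i => (xs (i + 1)).1 - (xs i).1 with hd
  have hd_bound : ∀ i, |d i| ≤ 2 * r ^ 2 := by
    intro i
    have : d i = (xs (i+1) - x).1 - (xs i - x).1 := by
      simp only [hd, Prod.fst_sub]; ring
    rw [this]
    calc |(xs (i+1) - x).1 - (xs i - x).1| ≤ |(xs (i+1) - x).1| + |(xs i - x).1| :=
        abs_sub _ _
      _ ≤ 2 * r ^ 2 := by linarith [habs (i+1), habs i]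
  have hr2 : r ^ 2 ≤ r := by nlinarith
  have hab : ∀ i, (xs i - ((r:ℝ), (0:E3))).1 ≤ (xs (i+1) + ((r:ℝ), (0:E3))).1 := by
    intro i
    simp only [Prod.fst_sub, Prod.fst_add]
    have := abs_le.1 (hd_bound i)
    simp only [hd] at this
    nlinarith [this.1]
  -- the cross bound
  set a : Fin (n+1) → ℝ := fun i => Real.sqrt c * (d i + 2 * r) with ha
  have ha_nonneg : ∀ i, 0 ≤ a i := by
    intro i
    have := abs_le.1 (hd_bound i)
    have h2 : 0 ≤ d i + 2 * r := by nlinarith [this.1]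
    positivity
  have hτ_le : ∀ i, timeSep c q (xs i - (r, 0)) (xs (i + 1) + (r, 0)) ≤ a i := by
    intro i
    have := timeSep_le c hc q hqc hqpos _ _ (hab i)
    have he : (xs (i+1) + ((r:ℝ), (0:E3))).1 - (xs i - ((r:ℝ), (0:E3))).1 = d i + 2 * r := by
      simp only [Prod.fst_sub, Prod.fst_add, hd]; ring
    rwa [he] at this
  have hτ_nonneg : ∀ i, 0 ≤ timeSep c q (xs i - (r, 0)) (xs (i + 1) + (r, 0)) := fun i =>
    timeSep_nonneg c hc q hqc hqpos _ _ (hab i)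
  have hpow : ∀ i, timeSep c q (xs i - (r, 0)) (xs (i + 1) + (r, 0)) ^ pp ≤ a i ^ pp :=
    fun i => Real.rpow_le_rpow (hτ_nonneg i) (hτ_le i) hpp.1.le
  have hsum_d : ∑ i, d i = 0 := by
    have : ∑ i : Fin (n+1), (xs (i + 1)).1 = ∑ i : Fin (n+1), (xs i).1 :=
      Fintype.sum_equiv (Equiv.addRight 1) _ _ (fun i => rfl)
    simp only [hd]
    rw [Finset.sum_sub_distrib, this, sub_self]
  have hsum_a : ∑ i, a i = ((n:ℝ) + 1) * (2 * r * Real.sqrt c) := by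
    simp only [ha]
    rw [← Finset.mul_sum, Finset.sum_add_distrib, hsum_d, Finset.sum_const]
    simp [Finset.card_univ]
    ring
  have hcon : ConcaveOn ℝ (Ici 0) (fun t : ℝ => t ^ pp) :=
    Real.concaveOn_rpow hpp.1.le hpp.2
  have hnpos : (0:ℝ) < (n:ℝ) + 1 := by positivity
  have jensen : ∑ i, ((n:ℝ)+1)⁻¹ • (a i ^ pp) ≤ (∑ i, ((n:ℝ)+1)⁻¹ • a i) ^ pp := by
    have := hcon.le_map_sum (t := Finset.univ) (w := fun _ : Fin (n+1) => ((n:ℝ)+1)⁻¹)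
      (p := a) (fun i _ => by positivity)
      (by
        rw [Finset.sum_const]
        simp [Finset.card_univ]
        rw [mul_inv_cancel₀ hnpos.ne'])
      (fun i _ => ha_nonneg i)
    exact this
  have hsum_wa : ∑ i, ((n:ℝ)+1)⁻¹ • a i = 2 * r * Real.sqrt c := by
    simp only [smul_eq_mul]
    rw [← Finset.mul_sum, hsum_a]
    field_simp
  constructor
  · calc ∑ i, timeSep c q (xs i - (r, 0)) (xs (i + 1) + (r, 0)) ^ pp
        ≤ ∑ i, a i ^ pp := Finset.sum_le_sum (fun i _ => hpow i)
      _ = ((n:ℝ)+1) * ∑ i, ((n:ℝ)+1)⁻¹ • (a i ^ pp) := by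
          rw [Finset.smul_sum.symm]
          simp [smul_eq_mul]
          rw [← mul_assoc, mul_inv_cancel₀ hnpos.ne', one_mul]
      _ ≤ ((n:ℝ)+1) * ((∑ i, ((n:ℝ)+1)⁻¹ • a i) ^ pp) :=
          mul_le_mul_of_nonneg_left jensen hnpos.le
      _ = ((n:ℝ)+1) * (2 * r * Real.sqrt c) ^ pp := by rw [hsum_wa]
  · have : ∀ i : Fin (n+1), timeSep c q (xs i - (r, 0)) (xs i + (r, 0)) ^ pp
        = (2 * r * Real.sqrt c) ^ pp := fun i => by
      rw [timeSep_straight c hc q hqc hqpos r hr0 (xs i)]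
    rw [Finset.sum_congr rfl (fun i _ => this i), Finset.sum_const]
    simp only [Finset.card_univ, Fintype.card_fin, nsmul_eq_mul]
    push_cast
    ring
end
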